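/- The subalgebra m_2 intersects the centralizer of e_2 trivially: if x ∈ m_2 satisfies [e_2, x] = 0, then x = 0. -/

import Mathlib

open Matrix

/-- The boxes of the right-aligned Young diagram of `μ` (0-based: box `⟨r, s⟩`
corresponds to the box in row `r+1`, `s+1`-th from the right end of its row). -/
abbrev Box (k : ℕ) (μ : Fin k → ℕ) := (r : Fin k) × Fin (μ r)

/-- The nilpotent `e₁` of Jordan type `μ`, sending `b_{r,s} ↦ b_{r,s+1}`. -/
noncomputable def e1 (k : ℕ) (μ : Fin k → ℕ) : Matrix (Box k μ) (Box k μ) ℂ :=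
  Matrix.of fun t u => if t.1 = u.1 ∧ t.2.val = u.2.val + 1 then 1 else 0

/-- The nilpotent `e₂ = e₁ + Σ_{s=1}^{μ_j} E_{(i,s),(j,s)}`. -/
noncomputable def e2 (k : ℕ) (μ : Fin k → ℕ) (i j : Fin k) : Matrix (Box k μ) (Box k μ) ℂ :=
  e1 k μ + Matrix.of fun t u => if t.1 = i ∧ u.1 = j ∧ t.2.val = u.2.val then 1 else 0

/-- `E_m := Σ_{r=i}^{j−m} Σ_{s=1}^{μ_{r+m}} E_{(r+m,s),(r,s)}`. -/
noncomputable def Em (k : ℕ) (μ : Fin k → ℕ) (i j : Fin k) (m : ℕ) :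
    Matrix (Box k μ) (Box k μ) ℂ :=
  Matrix.of fun t u =>
    if i ≤ u.1 ∧ t.1 ≤ j ∧ t.1.val = u.1.val + m ∧ t.2.val = u.2.val then 1 else 0

/-- `m₁ := span{E_{t,u} : s_t < s_u}`. -/
noncomputable def m1 (k : ℕ) (μ : Fin k → ℕ) : Submodule ℂ (Matrix (Box k μ) (Box k μ) ℂ) :=
  Submodule.span ℂ
    {x | ∃ t u : Box k μ, t.2.val < u.2.val ∧ x = Matrix.single t u 1}

/-- `k := span{E_1, …, E_{j−i}}`. -/
noncomputable def fk (k : ℕ) (μ : Fin k → ℕ) (i j : Fin k) :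
    Submodule ℂ (Matrix (Box k μ) (Box k μ) ℂ) :=
  Submodule.span ℂ {x | ∃ m : ℕ, 1 ≤ m ∧ m ≤ j.val - i.val ∧ x = Em k μ i j m}

/-- `m₂ := m₁ + k`. -/
noncomputable def m2 (k : ℕ) (μ : Fin k → ℕ) (i j : Fin k) :
    Submodule ℂ (Matrix (Box k μ) (Box k μ) ℂ) :=
  m1 k μ ⊔ fk k μ i j

/-- The covering partition `λ`. -/
def lam (k : ℕ) (μ : Fin k → ℕ) (i j : Fin k) : Fin k → ℕ :=
  fun r => if r = i then μ i + 1 else if r = j then μ j - 1 else μ r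

/-- `χ_a(x) = Tr(e_a x)`. -/
noncomputable def chi (k : ℕ) (μ : Fin k → ℕ) (ea x : Matrix (Box k μ) (Box k μ) ℂ) : ℂ :=
  (ea * x).trace


section Aux

variable {k : ℕ} {μ : Fin k → ℕ}

lemma box_sum_single (C : Prop) [Decidable C] (g : Box k μ → ℂ)
    (r : Fin k) (s : ℕ) :
    (∑ v : Box k μ, if C ∧ v.1 = r ∧ v.2.val = s then g v else 0)
      = if h : C ∧ s < μ r then g ⟨r, ⟨s, h.2⟩⟩ else 0 := by
  split_ifs with h
  · obtain ⟨hC, hs⟩ := h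
    rw [Fintype.sum_eq_single (⟨r, ⟨s, hs⟩⟩ : Box k μ)]
    · rw [if_pos ⟨hC, rfl, rfl⟩]
    · rintro ⟨r', s'⟩ hne
      rw [if_neg]
      rintro ⟨-, h1, h2⟩
      apply hne
      subst h1
      simp only [Sigma.mk.inj_iff, heq_eq_eq, true_and]
      exact Fin.ext h2
  · apply Finset.sum_eq_zero
    rintro ⟨r', s'⟩ -
    rw [if_neg]
    rintro ⟨hC, h1, h2⟩
    exact h ⟨hC, h1 ▸ h2 ▸ s'.isLt⟩

lemma box_sum_row (g : Box k μ → ℂ) (r : Fin k) :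
    (∑ v : Box k μ, if v.1 = r then g v else 0) = ∑ s : Fin (μ r), g ⟨r, s⟩ := by
  rw [← Finset.univ_sigma_univ, Finset.sum_sigma]
  rw [Finset.sum_eq_single r]
  · simp
  · intro b _ hb
    apply Finset.sum_eq_zero
    intro s _
    exact if_neg hb
  · simp

lemma e2_mul_apply (i j : Fin k)
    (x : Matrix (Box k μ) (Box k μ) ℂ) (t u : Box k μ) :
    (e2 k μ i j * x) t u =
      (if _ : 0 < t.2.val then
          x ⟨t.1, ⟨t.2.val - 1, Nat.lt_of_le_of_lt (Nat.sub_le _ _) t.2.isLt⟩⟩ u else 0) +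
      (if h : t.1 = i ∧ t.2.val < μ j then x ⟨j, ⟨t.2.val, h.2⟩⟩ u else 0) := by
  rw [Matrix.mul_apply]
  simp only [e2, e1, Matrix.add_apply, Matrix.of_apply, add_mul, ite_mul, one_mul, zero_mul]
  rw [Finset.sum_add_distrib]
  congr 1
  · have hc : ∀ v : Box k μ,
        (if t.1 = v.1 ∧ t.2.val = v.2.val + 1 then x v u else 0)
          = if (0 < t.2.val) ∧ v.1 = t.1 ∧ v.2.val = t.2.val - 1 then x v u else 0 := by
      intro v
      refine if_congr ?_ rfl rfl
      constructor
      · rintro ⟨h1, h2⟩; exact ⟨by omega, h1.symm, by omega⟩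
      · rintro ⟨h0, h1, h2⟩; exact ⟨h1.symm, by omega⟩
    rw [Finset.sum_congr rfl fun v _ => hc v, box_sum_single]
    by_cases h0 : 0 < t.2.val
    · rw [dif_pos ⟨h0, Nat.lt_of_le_of_lt (Nat.sub_le _ _) t.2.isLt⟩, dif_pos h0]
    · rw [dif_neg (fun h => h0 h.1), dif_neg h0]
  · have hc : ∀ v : Box k μ,
        (if t.1 = i ∧ v.1 = j ∧ t.2.val = v.2.val then x v u else 0)
          = if (t.1 = i) ∧ v.1 = j ∧ v.2.val = t.2.val then x v u else 0 := by
      intro v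
      refine if_congr ?_ rfl rfl
      constructor
      · rintro ⟨h1, h2, h3⟩; exact ⟨h1, h2, h3.symm⟩
      · rintro ⟨h1, h2, h3⟩; exact ⟨h1, h2, h3.symm⟩
    rw [Finset.sum_congr rfl fun v _ => hc v, box_sum_single]

lemma mul_e2_apply (i j : Fin k)
    (x : Matrix (Box k μ) (Box k μ) ℂ) (t u : Box k μ) :
    (x * e2 k μ i j) t u =
      (if h : u.2.val + 1 < μ u.1 then x t ⟨u.1, ⟨u.2.val + 1, h⟩⟩ else 0) +
      (if h : u.1 = j ∧ u.2.val < μ i then x t ⟨i, ⟨u.2.val, h.2⟩⟩ else 0) := by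
  rw [Matrix.mul_apply]
  simp only [e2, e1, Matrix.add_apply, Matrix.of_apply, mul_add, mul_ite, mul_one, mul_zero]
  rw [Finset.sum_add_distrib]
  congr 1
  · have hc : ∀ v : Box k μ,
        (if v.1 = u.1 ∧ v.2.val = u.2.val + 1 then x t v else 0)
          = if True ∧ v.1 = u.1 ∧ v.2.val = u.2.val + 1 then x t v else 0 := by
      intro v; exact if_congr (true_and _).symm.to_iff rfl rfl
    rw [Finset.sum_congr rfl fun v _ => hc v, box_sum_single]
    by_cases h0 : u.2.val + 1 < μ u.1
    · rw [dif_pos ⟨trivial, h0⟩, dif_pos h0]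
    · rw [dif_neg (fun h => h0 h.2), dif_neg h0]
  · have hc : ∀ v : Box k μ,
        (if v.1 = i ∧ u.1 = j ∧ v.2.val = u.2.val then x t v else 0)
          = if (u.1 = j) ∧ v.1 = i ∧ v.2.val = u.2.val then x t v else 0 := by
      intro v
      refine if_congr ?_ rfl rfl
      constructor
      · rintro ⟨h1, h2, h3⟩; exact ⟨h2, h1, h3⟩
      · rintro ⟨h1, h2, h3⟩; exact ⟨h2, h1, h3⟩
    rw [Finset.sum_congr rfl fun v _ => hc v, box_sum_single]

/-- Matrices supported on `s_t < s_u` together with "diagonal" `E`-positions,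
with entries constant along each diagonal `E_m`. -/
noncomputable def goodSub (k : ℕ) (μ : Fin k → ℕ) (i j : Fin k) :
    Submodule ℂ (Matrix (Box k μ) (Box k μ) ℂ) where
  carrier := {x |
      (∀ t u : Box k μ, ¬ t.2.val < u.2.val →
        ¬ (t.2.val = u.2.val ∧ i ≤ u.1 ∧ u.1 < t.1 ∧ t.1 ≤ j) → x t u = 0) ∧
      (∀ t u t' u' : Box k μ, t.2.val = u.2.val → t'.2.val = u'.2.val →
        i ≤ u.1 → u.1 < t.1 → t.1 ≤ j → i ≤ u'.1 → u'.1 < t'.1 → t'.1 ≤ j →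
        t.1.val - u.1.val = t'.1.val - u'.1.val → x t u = x t' u')}
  add_mem' := by
    rintro a b ⟨ha1, ha2⟩ ⟨hb1, hb2⟩
    constructor
    · intro t u h1 h2
      show a t u + b t u = 0
      rw [ha1 t u h1 h2, hb1 t u h1 h2, add_zero]
    · intro t u t' u' e1' e2' f1 f2 f3 g1 g2 g3 hd
      show a t u + b t u = a t' u' + b t' u'
      rw [ha2 t u t' u' e1' e2' f1 f2 f3 g1 g2 g3 hd,
        hb2 t u t' u' e1' e2' f1 f2 f3 g1 g2 g3 hd]
  zero_mem' := by
    constructor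
    · intro t u _ _; rfl
    · intro t u t' u' _ _ _ _ _ _ _ _ _; rfl
  smul_mem' := by
    rintro c a ⟨ha1, ha2⟩
    constructor
    · intro t u h1 h2
      show c * a t u = 0
      rw [ha1 t u h1 h2, mul_zero]
    · intro t u t' u' e1' e2' f1 f2 f3 g1 g2 g3 hd
      show c * a t u = c * a t' u'
      rw [ha2 t u t' u' e1' e2' f1 f2 f3 g1 g2 g3 hd]

lemma m2_le_goodSub (i j : Fin k) : m2 k μ i j ≤ goodSub k μ i j := by
  refine sup_le (Submodule.span_le.mpr ?_) (Submodule.span_le.mpr ?_)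
  · rintro _ ⟨t0, u0, hlt, rfl⟩
    constructor
    · intro t u h1 _
      rw [Matrix.single]
      show (if t0 = t ∧ u0 = u then (1:ℂ) else 0) = 0
      rw [if_neg]
      rintro ⟨rfl, rfl⟩
      exact h1 hlt
    · intro t u t' u' e1' e2' f1 f2 f3 g1 g2 g3 _
      rw [Matrix.single]
      show (if t0 = t ∧ u0 = u then (1:ℂ) else 0)
          = (if t0 = t' ∧ u0 = u' then (1:ℂ) else 0)
      rw [if_neg, if_neg]
      · rintro ⟨rfl, rfl⟩; omega
      · rintro ⟨rfl, rfl⟩; omega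
  · rintro _ ⟨m, hm1, hm2, rfl⟩
    constructor
    · intro t u h1 h2
      simp only [Em, Matrix.of_apply]
      rw [if_neg]
      rintro ⟨c1, c2, c3, c4⟩
      exact h2 ⟨c4, c1, Fin.lt_def.mpr (by omega), c2⟩
    · intro t u t' u' e1' e2' f1 f2 f3 g1 g2 g3 hd
      simp only [Em, Matrix.of_apply]
      have hlt := Fin.lt_def.mp f2
      have hlt' := Fin.lt_def.mp g2
      refine if_congr ?_ rfl rfl
      constructor
      · rintro ⟨-, -, c3, -⟩; exact ⟨g1, g3, by omega, e2'⟩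
      · rintro ⟨-, -, c3, -⟩; exact ⟨f1, f3, by omega, e1'⟩


lemma ekill (i j : Fin k) (hanti : Antitone μ) (hposj : 0 < μ j)
    (x : Matrix (Box k μ) (Box k μ) ℂ)
    (he : e2 k μ i j * x = x * e2 k μ i j)
    (hconst : ∀ t u t' u' : Box k μ, t.2.val = u.2.val → t'.2.val = u'.2.val →
        i ≤ u.1 → u.1 < t.1 → t.1 ≤ j → i ≤ u'.1 → u'.1 < t'.1 → t'.1 ≤ j →
        t.1.val - u.1.val = t'.1.val - u'.1.val → x t u = x t' u')
    (t u : Box k μ) (hs : t.2.val = u.2.val)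
    (h1 : i ≤ u.1) (h2 : u.1 < t.1) (h3 : t.1 ≤ j) : x t u = 0 := by
  have h1' := Fin.le_def.mp h1
  have h2' := Fin.lt_def.mp h2
  have h3' := Fin.le_def.mp h3
  set m : ℕ := t.1.val - u.1.val with hmdef
  have hq : j.val - m < k := by have := j.isLt; omega
  set q : Fin k := ⟨j.val - m, hq⟩ with hqdef
  have hiq : i.val ≤ q.val := by simp only [hqdef]; omega
  have hqj : q.val < j.val := by simp only [hqdef]; omega
  have hμqi : μ q ≤ μ i := hanti (Fin.le_def.mpr hiq)
  have hμjq : μ j ≤ μ q := hanti (Fin.le_def.mpr (le_of_lt hqj))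
  have hqnej : ¬ (j = q) := fun h => by rw [h] at hqj; omega
  have hinej : ¬ ((i : Fin k) = j) := fun h => by rw [h] at hiq; omega
  set w : Matrix (Box k μ) (Box k μ) ℂ :=
    Matrix.of (fun a b => if a.1 = q ∧ b.1 = i ∧ a.2.val = b.2.val then 1 else 0) with hwdef
  set M : Matrix (Box k μ) (Box k μ) ℂ :=
    Matrix.of (fun a b => if a.1 = q ∧ b.1 = j ∧ a.2.val = b.2.val then 1 else 0) with hMdef
  have hM : w * e2 k μ i j - e2 k μ i j * w = M := by
    ext a b
    rw [Matrix.sub_apply, mul_e2_apply i j w a b, e2_mul_apply i j w a b]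
    simp only [hwdef, hMdef, Matrix.of_apply]
    have hal := a.2.isLt
    have hbl := b.2.isLt
    clear_value q w M
    clear he hconst hs hmdef hqdef hwdef hMdef w M x hposj hanti h1 h2 h3 h1' h2' h3' m hq t u
    obtain ⟨a1, a2⟩ := a
    obtain ⟨b1, b2⟩ := b
    simp only at hal hbl ⊢
    split_ifs <;> try norm_num
    all_goals casesm* _ ∧ _
    all_goals subst_vars
    all_goals first | omega | simp_all
  have htr0 : (M * x).trace = 0 := by
    rw [← hM, sub_mul, Matrix.trace_sub]
    rw [mul_assoc w, he, ← mul_assoc]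
    rw [mul_assoc (e2 k μ i j) w x, Matrix.trace_mul_comm (e2 k μ i j) (w * x)]
    exact sub_self _
  have htr1 : (M * x).trace = (μ j : ℂ) * x t u := by
    have hstep : (M * x).trace
        = ∑ v : Box k μ, (if v.1 = j then
            (if h : v.2.val < μ q then x v ⟨q, ⟨v.2.val, h⟩⟩ else 0) else 0) := by
      rw [Matrix.trace]
      simp only [Matrix.diag, Matrix.mul_apply, hMdef, Matrix.of_apply]
      rw [Finset.sum_comm]
      refine Finset.sum_congr rfl fun v _ => ?_
      have hc : ∀ a : Box k μ,
          (if a.1 = q ∧ v.1 = j ∧ a.2.val = v.2.val then (1:ℂ) else 0) * x v a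
            = if (v.1 = j) ∧ a.1 = q ∧ a.2.val = v.2.val then x v a else 0 := by
        intro a
        rw [ite_mul, one_mul, zero_mul]
        refine if_congr ?_ rfl rfl
        constructor
        · rintro ⟨c1, c2, c3⟩; exact ⟨c2, c1, c3⟩
        · rintro ⟨c1, c2, c3⟩; exact ⟨c2, c1, c3⟩
      rw [Finset.sum_congr rfl fun a _ => hc a, box_sum_single]
      by_cases hv : v.1 = j
      · rw [if_pos hv, dif_pos ⟨hv, lt_of_lt_of_le (hv ▸ v.2.isLt) hμjq⟩,
          dif_pos (lt_of_lt_of_le (hv ▸ v.2.isLt) hμjq)]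
      · rw [if_neg hv, dif_neg (fun h => hv h.1)]
    rw [hstep, box_sum_row (fun v => if h : v.2.val < μ q then x v ⟨q, ⟨v.2.val, h⟩⟩ else 0) j]
    have hqv : (q : Fin k).val = j.val - m := rfl
    have hterm : ∀ s : Fin (μ j),
        (if h : ((⟨j, s⟩ : Box k μ)).2.val < μ q
          then x ⟨j, s⟩ ⟨q, ⟨((⟨j, s⟩ : Box k μ)).2.val, h⟩⟩ else 0) = x t u := by
      intro s
      rw [dif_pos (lt_of_lt_of_le s.isLt hμjq)]
      exact hconst ⟨j, s⟩ ⟨q, ⟨s.val, lt_of_lt_of_le s.isLt hμjq⟩⟩ t u rfl hs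
        (Fin.le_def.mpr hiq) (Fin.lt_def.mpr hqj) (le_refl j) h1 h2 h3
        (by show (j:ℕ) - (q:ℕ) = t.1.val - u.1.val; omega)
    rw [Finset.sum_congr rfl fun s _ => hterm s, Finset.sum_const, Finset.card_univ,
      Fintype.card_fin, nsmul_eq_mul]
  rw [htr1] at htr0
  exact (mul_eq_zero.mp htr0).resolve_left (Nat.cast_ne_zero.mpr hposj.ne')

end Aux

/-- `m₂` intersects the centralizer of `e₂` trivially. -/
theorem stmt13
    (k : ℕ) (n : ℕ) (μ : Fin k → ℕ)
    (hpos : ∀ r, 0 < μ r) (hanti : Antitone μ)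
    (hn : ∑ r : Fin k, μ r = n)
    (i j : Fin k) (hij : i < j)
    (hi : ∀ r, r < i → μ i < μ r)
    (hj : ∀ r, j < r → μ r < μ j)
    (hcase : (j : ℕ) = (i : ℕ) + 1 ∨ μ i = μ j)
    (x : Matrix (Box k μ) (Box k μ) ℂ) (hx : x ∈ m2 k μ i j)
    (hcomm : e2 k μ i j * x - x * e2 k μ i j = 0) :
    x = 0 := by
  obtain ⟨hsupp, hconst⟩ := m2_le_goodSub i j hx
  have he : e2 k μ i j * x = x * e2 k μ i j := sub_eq_zero.mp hcomm
  have hE : ∀ t u : Box k μ, t.2.val = u.2.val → i ≤ u.1 → u.1 < t.1 → t.1 ≤ j → x t u = 0 :=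
    fun t u hs h1 h2 h3 => ekill i j hanti (hpos j) x he hconst t u hs h1 h2 h3
  have hzero : ∀ t u : Box k μ, ¬ t.2.val < u.2.val → x t u = 0 := by
    intro t u hlt
    by_cases hEc : t.2.val = u.2.val ∧ i ≤ u.1 ∧ u.1 < t.1 ∧ t.1 ≤ j
    · exact hE t u hEc.1 hEc.2.1 hEc.2.2.1 hEc.2.2.2
    · exact hsupp t u hlt hEc
  have hcol : ∀ N : ℕ, ∀ t u : Box k μ, u.2.val = N → x t u = 0 := by
    intro N
    induction N with
    | zero =>
      intro t u hu
      exact hzero t u (by omega)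
    | succ N ih =>
      rintro t ⟨u1, u2⟩ hu
      simp only at hu
      have hu1 : N < μ u1 := by have := u2.isLt; omega
      have hrel : (e2 k μ i j * x) t ⟨u1, ⟨N, hu1⟩⟩
          = (x * e2 k μ i j) t ⟨u1, ⟨N, hu1⟩⟩ := by rw [he]
      rw [e2_mul_apply, mul_e2_apply] at hrel
      rw [dif_pos (show N + 1 < μ u1 from hu ▸ u2.isLt)] at hrel
      have hueq : (⟨u1, ⟨N + 1, hu ▸ u2.isLt⟩⟩ : Box k μ) = ⟨u1, u2⟩ :=
        Sigma.ext rfl (heq_of_eq (Fin.ext hu.symm))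
      rw [hueq] at hrel
      have z : ∀ (r : Fin k) (h : N < μ r) (t' : Box k μ), x t' ⟨r, ⟨N, h⟩⟩ = 0 :=
        fun r h t' => ih t' ⟨r, ⟨N, h⟩⟩ rfl
      split_ifs at hrel <;>
        simp only [z, zero_add, add_zero] at hrel <;>
        exact hrel.symm
  ext t u
  exact hcol u.2.val t u rfl
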